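/- The function Ψ is continuous at every irrational point x of the interval [0, 1/2]. -/

import Mathlib

/-- `T(x) = x·(1 + {1/x})` for `x ≠ 0`, `T(0) = 0`. -/
noncomputable def Tmap (x : ℝ) : ℝ := if x = 0 then 0 else x * (1 + Int.fract (1 / x))

/-- `I(x) = {1/x} / (1 + {1/x})` for `x ≠ 0`, `I(0) = 0`. -/
noncomputable def Imap (x : ℝ) : ℝ :=
  if x = 0 then 0 else Int.fract (1 / x) / (1 + Int.fract (1 / x))

/-- `Ψ(x) = 2x + 2·Σ_{j ≥ 1} T(x)·T(I(x))·⋯·T(I^{j-1}(x))·I^{j}(x)`. -/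
noncomputable def Psi (x : ℝ) : ℝ :=
  2 * x + 2 * ∑' j : ℕ, (∏ i ∈ Finset.range (j + 1), Tmap (Imap^[i] x)) * Imap^[j + 1] x

lemma Imap_nonneg (y : ℝ) : 0 ≤ Imap y := by
  unfold Imap; split
  · exact le_refl 0
  · have h0 := Int.fract_nonneg (1 / y)
    positivity

lemma Imap_le_half (y : ℝ) : Imap y ≤ 1 / 2 := by
  unfold Imap; split
  · norm_num
  · have h0 := Int.fract_nonneg (1 / y)
    have h1 := Int.fract_lt_one (1 / y)
    rw [div_le_div_iff₀ (by linarith) (by norm_num)]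
    linarith

lemma Tmap_nonneg (y : ℝ) (hy : 0 ≤ y) : 0 ≤ Tmap y := by
  unfold Tmap; split
  · exact le_refl 0
  · have h0 := Int.fract_nonneg (1 / y)
    positivity

lemma Tmap_le_one (y : ℝ) (hy0 : 0 ≤ y) (hy : y ≤ 1 / 2) : Tmap y ≤ 1 := by
  unfold Tmap; split
  · norm_num
  · have h1 := Int.fract_lt_one (1 / y)
    have h0 := Int.fract_nonneg (1 / y)
    nlinarith

/-- Key pair bound: `T(y) * T(I(y)) ≤ y` for `0 ≤ y ≤ 1/2`. -/
lemma Tmap_pair_le (y : ℝ) (hy0 : 0 ≤ y) : Tmap y * Tmap (Imap y) ≤ y := by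
  by_cases hy : y = 0
  · simp [Tmap, Imap, hy]
  set f := Int.fract (1 / y) with hf
  have h0f : 0 ≤ f := Int.fract_nonneg _
  have h1f : f < 1 := Int.fract_lt_one _
  by_cases hf0 : f = 0
  · have hz : Imap y = 0 := by rw [Imap, if_neg hy, ← hf, hf0]; simp
    rw [hz]
    simp [Tmap]; exact hy0
  have hfpos : 0 < f := lt_of_le_of_ne h0f (Ne.symm hf0)
  have hz : Imap y = f / (1 + f) := by rw [Imap, if_neg hy]
  have hzpos : 0 < Imap y := by rw [hz]; positivity
  have hzle : Imap y ≤ 1 / 2 := Imap_le_half y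
  have h2 : (2 : ℝ) ≤ 1 / Imap y := by
    rw [le_div_iff₀ hzpos]; linarith
  have hfl : (2 : ℤ) ≤ ⌊1 / Imap y⌋ := by
    apply Int.le_floor.2; exact_mod_cast h2
  have hflR : (2 : ℝ) ≤ (⌊1 / Imap y⌋ : ℝ) := by exact_mod_cast hfl
  have hfr : Int.fract (1 / Imap y) ≤ 1 / Imap y - 2 := by
    rw [Int.fract]; linarith
  have hT1 : Tmap y = y * (1 + f) := by rw [Tmap, if_neg hy]
  have hT2 : Tmap (Imap y) = Imap y * (1 + Int.fract (1 / Imap y)) := by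
    rw [Tmap, if_neg (ne_of_gt hzpos)]
  have hTz : Tmap (Imap y) ≤ 1 - Imap y := by
    rw [hT2]
    have h3 : 1 + Int.fract (1 / Imap y) ≤ 1 / Imap y - 1 := by linarith
    have h4 := mul_le_mul_of_nonneg_left h3 (le_of_lt hzpos)
    have h5 : Imap y * (1 / Imap y) = 1 := by
      field_simp
    nlinarith
  have h1z : 1 - Imap y = 1 / (1 + f) := by
    rw [hz]; field_simp; ring
  have hT1nn : 0 ≤ Tmap y := Tmap_nonneg y hy0
  calc Tmap y * Tmap (Imap y) ≤ Tmap y * (1 - Imap y) :=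
        mul_le_mul_of_nonneg_left hTz hT1nn
    _ = (y * (1 + f)) * (1 / (1 + f)) := by rw [hT1, h1z]
    _ = y := by field_simp

lemma two_step_induction (P : ℕ → Prop) (h0 : P 0) (h1 : P 1)
    (hstep : ∀ n, P n → P (n + 2)) : ∀ n, P n := by
  intro n
  induction n using Nat.strong_induction_on with
  | _ n ih =>
    match n with
    | 0 => exact h0
    | 1 => exact h1
    | (m + 2) => exact hstep m (ih m (by omega))

lemma iter_mem (y : ℝ) (hy : y ∈ Set.Icc (0 : ℝ) (1 / 2)) (i : ℕ) :
    Imap^[i] y ∈ Set.Icc (0 : ℝ) (1 / 2) := by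
  induction i with
  | zero => exact hy
  | succ n ih =>
    rw [Function.iterate_succ_apply']
    exact ⟨Imap_nonneg _, Imap_le_half _⟩

lemma prod_bound (y : ℝ) (hy : y ∈ Set.Icc (0 : ℝ) (1 / 2)) :
    ∀ n, ∏ i ∈ Finset.range n, Tmap (Imap^[i] y) ≤ (1 / 2 : ℝ) ^ (n / 2) := by
  have hnn : ∀ i, 0 ≤ Tmap (Imap^[i] y) := fun i => Tmap_nonneg _ (iter_mem y hy i).1
  apply two_step_induction
  · simp
  · simpa using Tmap_le_one _ (iter_mem y hy 0).1 (iter_mem y hy 0).2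
  · intro n ihn
    have key : Tmap (Imap^[n] y) * Tmap (Imap^[n + 1] y) ≤ 1 / 2 := by
      have := Tmap_pair_le (Imap^[n] y) (iter_mem y hy n).1
      rw [Function.iterate_succ_apply']
      exact this.trans (iter_mem y hy n).2
    have hprodnn : 0 ≤ ∏ i ∈ Finset.range n, Tmap (Imap^[i] y) :=
      Finset.prod_nonneg fun i _ => hnn i
    have heq : ∏ i ∈ Finset.range (n + 2), Tmap (Imap^[i] y)
        = (∏ i ∈ Finset.range n, Tmap (Imap^[i] y))
          * (Tmap (Imap^[n] y) * Tmap (Imap^[n + 1] y)) := by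
      rw [Finset.prod_range_succ, Finset.prod_range_succ, mul_assoc]
    rw [heq]
    have hpow : ((n + 2) / 2 : ℕ) = n / 2 + 1 := by omega
    rw [hpow, pow_succ]
    exact mul_le_mul ihn key (mul_nonneg (hnn n) (hnn (n + 1))) (by positivity)

lemma term_bound (y : ℝ) (hy : y ∈ Set.Icc (0 : ℝ) (1 / 2)) (j : ℕ) :
    ‖(∏ i ∈ Finset.range (j + 1), Tmap (Imap^[i] y)) * Imap^[j + 1] y‖
      ≤ (1 / 2 : ℝ) ^ ((j + 1) / 2) * (1 / 2) := by
  have h1 : 0 ≤ ∏ i ∈ Finset.range (j + 1), Tmap (Imap^[i] y) :=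
    Finset.prod_nonneg fun i _ => Tmap_nonneg _ (iter_mem y hy i).1
  have h2 := (iter_mem y hy (j + 1)).1
  have h3 := (iter_mem y hy (j + 1)).2
  rw [Real.norm_eq_abs, abs_of_nonneg (mul_nonneg h1 h2)]
  exact mul_le_mul (prod_bound y hy (j + 1)) h3 h2 (by positivity)

lemma summable_bound : Summable (fun j : ℕ => (1 / 2 : ℝ) ^ ((j + 1) / 2) * (1 / 2)) := by
  apply Summable.even_add_odd
  · apply Summable.congr ((summable_geometric_of_lt_one (by norm_num) (by norm_num :
      (1 / 2 : ℝ) < 1)).mul_right (1 / 2))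
    intro k
    rw [show (2 * k + 1) / 2 = k by omega]
  · apply Summable.congr (((summable_geometric_of_lt_one (by norm_num) (by norm_num :
      (1 / 2 : ℝ) < 1)).mul_left (1 / 2)).mul_right (1 / 2))
    intro k
    rw [show (2 * k + 1 + 1) / 2 = k + 1 by omega, pow_succ]
    ring

lemma irrational_ne_zero {y : ℝ} (hy : Irrational y) : y ≠ 0 := by
  intro h
  exact (Rat.not_irrational 0) (by simpa [h] using hy)

lemma fract_irrational {y : ℝ} (hy : Irrational y) : Irrational (Int.fract y) := by
  rw [Int.fract]
  exact hy.sub_intCast _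

lemma Imap_irrational {y : ℝ} (hy : Irrational y) : Irrational (Imap y) := by
  have hy0 : y ≠ 0 := irrational_ne_zero hy
  have h1y : Irrational (1 / y) := by rw [one_div]; exact hy.inv
  have hf : Irrational (Int.fract (1 / y)) := fract_irrational h1y
  set f := Int.fract (1 / y) with hfe
  have h0f : 0 ≤ f := Int.fract_nonneg _
  have h1f : f < 1 := Int.fract_lt_one _
  have hz : Imap y = f / (1 + f) := by rw [Imap, if_neg hy0]
  rw [hz]
  by_contra h
  obtain ⟨q, hq⟩ := not_not.mp h
  have hzlt : f / (1 + f) < 1 := by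
    rw [div_lt_one (by linarith)]; linarith
  have hqlt : (q : ℝ) < 1 := by rw [hq]; exact hzlt
  have hq1 : (1 : ℝ) - q ≠ 0 := by linarith
  have hfq : f = (q : ℝ) / (1 - q) := by
    have h1 : (q : ℝ) * (1 + f) = f := by
      field_simp at hq
      linarith [hq]
    field_simp
    linarith
  apply hf
  rw [hfq]
  have : ((q / (1 - q) : ℚ) : ℝ) = (q : ℝ) / (1 - q) := by push_cast; ring
  exact ⟨q / (1 - q), this⟩

lemma Imap_pos {y : ℝ} (hy : Irrational y) : 0 < Imap y :=
  lt_of_le_of_ne (Imap_nonneg y) (Ne.symm (irrational_ne_zero (Imap_irrational hy)))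

lemma Tmap_continuousAt {y : ℝ} (hy : Irrational y) : ContinuousAt Tmap y := by
  have hy0 : y ≠ 0 := irrational_ne_zero hy
  have h1y : Irrational (1 / y) := by rw [one_div]; exact hy.inv
  have hfl : (1 / y : ℝ) ≠ (⌊(1 / y : ℝ)⌋ : ℝ) := h1y.ne_int _
  have hc : ContinuousAt (fun x : ℝ => x * (1 + Int.fract (1 / x))) y := by
    apply continuousAt_id.mul
    apply continuousAt_const.add
    exact (continuousAt_fract hfl).comp (continuousAt_const.div continuousAt_id hy0)
  apply hc.congr
  filter_upwards [eventually_ne_nhds hy0] with x hx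
  rw [Tmap, if_neg hx]

lemma Imap_continuousAt {y : ℝ} (hy : Irrational y) : ContinuousAt Imap y := by
  have hy0 : y ≠ 0 := irrational_ne_zero hy
  have h1y : Irrational (1 / y) := by rw [one_div]; exact hy.inv
  have hfl : (1 / y : ℝ) ≠ (⌊(1 / y : ℝ)⌋ : ℝ) := h1y.ne_int _
  have hfc : ContinuousAt (fun x : ℝ => Int.fract (1 / x)) y :=
    (continuousAt_fract hfl).comp (continuousAt_const.div continuousAt_id hy0)
  have hden : (1 : ℝ) + Int.fract (1 / y) ≠ 0 := by
    have := Int.fract_nonneg (1 / y); linarith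
  have hc : ContinuousAt (fun x : ℝ => Int.fract (1 / x) / (1 + Int.fract (1 / x))) y :=
    hfc.div (continuousAt_const.add hfc) hden
  apply hc.congr
  filter_upwards [eventually_ne_nhds hy0] with x hx
  rw [Imap, if_neg hx]

lemma iter_irrational {x : ℝ} (hx : Irrational x) (i : ℕ) : Irrational (Imap^[i] x) := by
  induction i with
  | zero => exact hx
  | succ n ih =>
    rw [Function.iterate_succ_apply']
    exact Imap_irrational ih

lemma iter_continuousAt {x : ℝ} (hx : Irrational x) (i : ℕ) :
    ContinuousAt (Imap^[i]) x := by
  induction i with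
  | zero => exact continuousAt_id
  | succ n ih =>
    rw [Function.iterate_succ']
    exact (Imap_continuousAt (iter_irrational hx n)).comp ih

theorem stmt_10 :
    ∀ x ∈ Set.Icc (0 : ℝ) (1 / 2), Irrational x →
      ContinuousWithinAt Psi (Set.Icc (0 : ℝ) (1 / 2)) x := by
  intro x hx hirr
  set s : Set ℝ := Set.Icc (0 : ℝ) (1 / 2) with hs
  set F : ℕ → ℝ → ℝ := fun j y =>
    (∏ i ∈ Finset.range (j + 1), Tmap (Imap^[i] y)) * Imap^[j + 1] y with hF
  have hFc : ∀ j, ContinuousAt (F j) x := by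
    intro j
    have hterm : ∀ i : ℕ, ContinuousAt (fun y => Tmap (Imap^[i] y)) x := fun i =>
      (Tmap_continuousAt (iter_irrational hirr i)).comp (iter_continuousAt hirr i)
    have hprod : ∀ t : Finset ℕ, ContinuousAt (fun y => ∏ i ∈ t, Tmap (Imap^[i] y)) x := by
      intro t
      induction t using Finset.induction with
      | empty => simpa using continuousAt_const
      | insert _ _ hni ih =>
        simp only [Finset.prod_insert hni]
        exact (hterm _).mul ih
    exact (hprod (Finset.range (j + 1))).mul (iter_continuousAt hirr (j + 1))
  have htuo : TendstoUniformlyOn (fun (t : Finset ℕ) y => ∑ j ∈ t, F j y)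
      (fun y => ∑' j, F j y) Filter.atTop s :=
    tendstoUniformlyOn_tsum summable_bound (fun j y hy => term_bound y hy j)
  have hsum : ContinuousWithinAt (fun y => ∑' j, F j y) s x := by
    apply continuousWithinAt_of_locally_uniform_approx_of_continuousWithinAt hx
    intro u hu
    obtain ⟨t, ht⟩ := (htuo u hu).exists
    exact ⟨s, self_mem_nhdsWithin, fun y => ∑ j ∈ t, F j y,
      (by
        have : ContinuousAt (fun y => ∑ j ∈ t, F j y) x :=
          tendsto_finset_sum t fun j _ => hFc j
        exact this.continuousWithinAt), fun y hy => ht y hy⟩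
  have : ContinuousWithinAt (fun y => 2 * y + 2 * ∑' j, F j y) s x :=
    (continuousWithinAt_const.mul continuousWithinAt_id).add
      (continuousWithinAt_const.mul hsum)
  exact this.congr (fun y _ => rfl) rfl
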